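/- Fix integers m ≥ 0, d ≥ 2, n ≥ 0, and set μ_{m,i} = i(i+m+d-1), q_{m,n}(x) = ∏_{i=1}^n (μ_{m,i} − x)/μ_{m,i}. Then for all real x ≥ μ_{m,n}, (−1)^n q_{m,n}(x) ≥ 0, and for all x ≥ μ_{m,n+1}, (−1)^n q_{m,n}(x) ≤ ∏_{i=1}^{n+1} (x − μ_{m,i-1})/μ_{m,i}. -/
import Mathlib


open scoped BigOperators

lemma q_aux (c : ℝ) (hc : 1 ≤ c) (n : ℕ) :
    (∀ x : ℝ, (n : ℝ) * ((n : ℝ) + c) ≤ x →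
      0 ≤ (-1 : ℝ) ^ n * ∏ i ∈ Finset.range n,
        ((((i : ℝ) + 1) * ((i : ℝ) + 1 + c)) - x) / (((i : ℝ) + 1) * ((i : ℝ) + 1 + c)))
    ∧
    (∀ x : ℝ, ((n : ℝ) + 1) * ((n : ℝ) + 1 + c) ≤ x →
      (-1 : ℝ) ^ n * (∏ i ∈ Finset.range n,
          ((((i : ℝ) + 1) * ((i : ℝ) + 1 + c)) - x) / (((i : ℝ) + 1) * ((i : ℝ) + 1 + c)))
        ≤ ∏ i ∈ Finset.range (n + 1),
            (x - ((i : ℝ) * ((i : ℝ) + c))) / (((i : ℝ) + 1) * ((i : ℝ) + 1 + c))) := by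
  set A : ℕ → ℝ := fun i => ((i : ℝ) + 1) * ((i : ℝ) + 1 + c) with hA
  have hpos : ∀ i : ℕ, 0 < A i := by
    intro i
    have h0 : (0 : ℝ) ≤ (i : ℝ) := Nat.cast_nonneg i
    have : (0 : ℝ) < (i : ℝ) + 1 := by linarith
    have : (0 : ℝ) < (i : ℝ) + 1 + c := by linarith
    exact mul_pos (by linarith) this
  have hflip : ∀ x : ℝ, ∀ k : ℕ,
      (-1 : ℝ) ^ k * ∏ i ∈ Finset.range k, (A i - x) / A i
        = ∏ i ∈ Finset.range k, (x - A i) / A i := by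
    intro x k
    have : ∏ i ∈ Finset.range k, (x - A i) / A i
        = ∏ i ∈ Finset.range k, ((-1 : ℝ) * ((A i - x) / A i)) :=
      Finset.prod_congr rfl fun i _ => by ring
    rw [this, Finset.prod_mul_distrib, Finset.prod_const, Finset.card_range]
  constructor
  · intro x hx
    rw [hflip]
    apply Finset.prod_nonneg
    intro i hi
    have hin : (i : ℝ) + 1 ≤ (n : ℝ) := by
      exact_mod_cast Nat.succ_le_of_lt (Finset.mem_range.mp hi)
    have h0 : (0 : ℝ) ≤ (i : ℝ) := Nat.cast_nonneg i
    have hAle : A i ≤ (n : ℝ) * ((n : ℝ) + c) := by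
      rw [hA]; dsimp only; nlinarith
    exact div_nonneg (by linarith) (hpos i).le
  · intro x hx
    rw [hflip]
    have hAn : A n ≤ x := by
      rw [hA]; dsimp only; linarith
    have hterm : ∀ i ∈ Finset.range n, 0 ≤ x - A i := by
      intro i hi
      have hin : (i : ℝ) + 1 ≤ (n : ℝ) := by
        exact_mod_cast Nat.succ_le_of_lt (Finset.mem_range.mp hi)
      have h0 : (0 : ℝ) ≤ (i : ℝ) := Nat.cast_nonneg i
      have : A i ≤ A n := by rw [hA]; dsimp only; nlinarith
      linarith
    -- rewrite both sides as quotients of products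
    have hLHS : ∏ i ∈ Finset.range n, (x - A i) / A i
        = (∏ i ∈ Finset.range n, (x - A i)) / (∏ i ∈ Finset.range n, A i) := by
      rw [Finset.prod_div_distrib]
    have hRHSnum : ∏ i ∈ Finset.range (n + 1), (x - ((i : ℝ) * ((i : ℝ) + c)))
        = (∏ i ∈ Finset.range n, (x - A i)) * x := by
      rw [Finset.prod_range_succ']
      congr 1
      · apply Finset.prod_congr rfl
        intro i _
        rw [hA]; push_cast; ring
      · push_cast; ring
    have hRHS : ∏ i ∈ Finset.range (n + 1), (x - ((i : ℝ) * ((i : ℝ) + c))) / A i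
        = ((∏ i ∈ Finset.range n, (x - A i)) * x) / ((∏ i ∈ Finset.range n, A i) * A n) := by
      rw [Finset.prod_div_distrib, hRHSnum, Finset.prod_range_succ]
    rw [hLHS, hRHS]
    have hP : 0 ≤ ∏ i ∈ Finset.range n, (x - A i) := Finset.prod_nonneg hterm
    have hQ : 0 < ∏ i ∈ Finset.range n, A i := Finset.prod_pos fun i _ => hpos i
    rw [div_le_div_iff₀ hQ (mul_pos hQ (hpos n))]
    have hPQ : 0 ≤ (∏ i ∈ Finset.range n, (x - A i)) * (∏ i ∈ Finset.range n, A i) :=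
      mul_nonneg hP hQ.le
    nlinarith [mul_le_mul_of_nonneg_left hAn hPQ]

/-- Inequalities for the interpolating polynomials q_{m,n} with nodes
μ_{m,i} = i(i+m+d-1): for x ≥ μ_{m,n}, (−1)^n q_{m,n}(x) ≥ 0, and for
x ≥ μ_{m,n+1}, (−1)^n q_{m,n}(x) ≤ ∏_{i=1}^{n+1}(x − μ_{m,i-1})/μ_{m,i}. -/
theorem q_mn_inequalities (d m n : ℕ) (hd : 2 ≤ d) :
    (∀ x : ℝ, (n * (n + m + d - 1) : ℝ) ≤ x →
      0 ≤ (-1 : ℝ) ^ n * ∏ i ∈ Finset.range n,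
        (((i + 1) * (i + 1 + m + d - 1) : ℝ) - x) / ((i + 1) * (i + 1 + m + d - 1) : ℝ))
    ∧
    (∀ x : ℝ, ((n + 1) * (n + 1 + m + d - 1) : ℝ) ≤ x →
      (-1 : ℝ) ^ n * (∏ i ∈ Finset.range n,
          (((i + 1) * (i + 1 + m + d - 1) : ℝ) - x) / ((i + 1) * (i + 1 + m + d - 1) : ℝ))
        ≤ ∏ i ∈ Finset.range (n + 1),
            (x - (i * (i + m + d - 1) : ℝ)) / ((i + 1) * (i + 1 + m + d - 1) : ℝ)) := by
  have hd' : (2 : ℝ) ≤ (d : ℝ) := by exact_mod_cast hd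
  have hm : (0 : ℝ) ≤ (m : ℝ) := Nat.cast_nonneg m
  have hc : (1 : ℝ) ≤ (m : ℝ) + (d : ℝ) - 1 := by linarith
  have hrw : ∀ y : ℝ, y + (m : ℝ) + (d : ℝ) - 1 = y + ((m : ℝ) + (d : ℝ) - 1) := by
    intro y; ring
  simp only [hrw]
  exact q_aux ((m : ℝ) + (d : ℝ) - 1) hc n
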